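/- For all integers k ≥ 1, r ≥ 1 and j ≥ 0, the two k×k determinants det((C(r+k+j-i-1, j+l-i))_{1≤i,l≤k}) and det((C(r+j-1, j+l-i))_{1≤i,l≤k}) are equal. (In the paper's notation this says {r+k-1, …, r+k-1}_j = [r, …, r]_j.) -/

import Mathlib

/-- Binomial coefficient `C(a,b)` for integers, with the convention that it is `0`
whenever `b < 0` or `b > a`. -/
def icb (a b : ℤ) : ℤ := if 0 ≤ b ∧ b ≤ a then (a.toNat.choose b.toNat : ℤ) else 0

lemma icb_eq_choose (a b : ℤ) (ha : 0 ≤ a) (hb : 0 ≤ b) :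
    icb a b = (a.toNat.choose b.toNat : ℤ) := by
  unfold icb
  by_cases h : b ≤ a
  · simp [hb, h]
  · have : a.toNat < b.toNat := by omega
    simp [hb, h, Nat.choose_eq_zero_of_lt this]

lemma icb_pascal (n m : ℤ) (hn : 1 ≤ n) :
    icb n m = icb (n - 1) m + icb (n - 1) (m - 1) := by
  rcases lt_trichotomy m 0 with hm | hm | hm
  · unfold icb; simp [show ¬ (0:ℤ) ≤ m by omega, show ¬ (0:ℤ) ≤ m - 1 by omega, show ¬ (1:ℤ) ≤ m by omega]
  · subst hm
    unfold icb
    simp [show ¬ (0:ℤ) ≤ (0:ℤ) - 1 by omega, hn, show (0:ℤ) ≤ n - 1 by omega,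
      show (0:ℤ) ≤ n by omega]
  · rw [icb_eq_choose n m (by omega) (by omega),
      icb_eq_choose (n-1) m (by omega) (by omega),
      icb_eq_choose (n-1) (m-1) (by omega) (by omega)]
    have h1 : n.toNat = (n-1).toNat + 1 := by omega
    have h2 : m.toNat = (m-1).toNat + 1 := by omega
    rw [h1, h2, Nat.choose_succ_succ']
    push_cast
    ring

/-- The interpolating family of matrices. -/
def Mmat (k : ℕ) (r j : ℤ) (s : ℕ) : Matrix (Fin k) (Fin k) ℤ :=
  Matrix.of fun i l : Fin k =>
    icb (r + j - 1 + max ((s : ℤ) - ((i : ℕ) : ℤ)) 0) (j + ((l : ℕ) : ℤ) - ((i : ℕ) : ℤ))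

lemma det_Mmat_step (k : ℕ) (r j : ℤ) (hr : 1 ≤ r) (hj : 0 ≤ j)
    (s : ℕ) (hs1 : 1 ≤ s) (hs : s ≤ k - 1) :
    (Mmat k r j s).det = (Mmat k r j (s - 1)).det := by
  have hk : 1 ≤ k := le_trans hs1 (le_trans hs (Nat.sub_le _ _))
  -- elementary matrix E = I - N
  set E : Matrix (Fin k) (Fin k) ℤ :=
    Matrix.of (fun i l : Fin k =>
      if i = l then 1 else if (l : ℕ) = (i : ℕ) + 1 ∧ (i : ℕ) < s then -1 else 0) with hE
  have hEdet : E.det = 1 := by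
    rw [Matrix.det_of_upperTriangular]
    · simp [hE]
    · intro i l hlt
      simp only [id_eq] at hlt
      simp only [hE, Matrix.of_apply]
      rw [if_neg (by intro h; subst h; exact lt_irrefl _ hlt),
        if_neg (by rintro ⟨h1, -⟩; rw [Fin.lt_def] at hlt; omega)]
  have hmul : E * Mmat k r j s = Mmat k r j (s - 1) := by
    ext i l
    rw [Matrix.mul_apply]
    by_cases hi : (i : ℕ) < s
    · -- row i gets updated
      have hi1 : (i : ℕ) + 1 < k := by omega
      set i' : Fin k := ⟨(i : ℕ) + 1, hi1⟩ with hi'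
      have hEi : ∀ t : Fin k, E i t =
          (if t = i then 1 else 0) + (if t = i' then -1 else 0) := by
        intro t
        simp only [hE, Matrix.of_apply]
        by_cases h1 : i = t
        · subst h1
          rw [if_pos rfl, if_pos rfl, if_neg (by simp [hi', Fin.ext_iff])]
          norm_num
        · rw [if_neg h1, if_neg (Ne.symm h1)]
          by_cases h2 : t = i'
          · rw [if_pos h2, if_pos ⟨by simp [h2, hi'], hi⟩]
            norm_num
          · rw [if_neg h2, if_neg (by rintro ⟨h3, -⟩; exact h2 (Fin.ext h3))]
            norm_num
      calc (∑ t, E i t * Mmat k r j s t l)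
          = ∑ t, ((if t = i then 1 else 0) * Mmat k r j s t l
              + (if t = i' then -1 else 0) * Mmat k r j s t l) := by
            refine Finset.sum_congr rfl fun t _ => ?_
            rw [hEi t, add_mul]
        _ = Mmat k r j s i l - Mmat k r j s i' l := by
            rw [Finset.sum_add_distrib]
            simp [Finset.sum_ite_eq, sub_eq_add_neg]
        _ = Mmat k r j (s - 1) i l := by
            simp only [Mmat, Matrix.of_apply, hi']
            have h1 : max ((s : ℤ) - ((i : ℕ) : ℤ)) 0 = (s : ℤ) - (i : ℕ) := by
              rw [max_eq_left]; omega
            have h2 : max ((s : ℤ) - (((i : ℕ) + 1 : ℕ) : ℤ)) 0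
                = (s : ℤ) - (i : ℕ) - 1 := by
              rw [max_eq_left] <;> push_cast <;> omega
            have h3 : max (((s - 1 : ℕ) : ℤ) - ((i : ℕ) : ℤ)) 0
                = (s : ℤ) - (i : ℕ) - 1 := by
              rw [max_eq_left] <;> omega
            rw [h1, h2, h3]
            have hp := icb_pascal (r + j - 1 + ((s : ℤ) - (i : ℕ)))
              (j + ((l : ℕ) : ℤ) - ((i : ℕ) : ℤ)) (by omega)
            have e1 : r + j - 1 + ((s : ℤ) - (i : ℕ)) - 1
                = r + j - 1 + ((s : ℤ) - (i : ℕ) - 1) := by ring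
            have e2 : j + ((l : ℕ) : ℤ) - ((i : ℕ) : ℤ) - 1
                = j + ((l : ℕ) : ℤ) - (((i : ℕ) + 1 : ℕ) : ℤ) := by push_cast; ring
            rw [e1, e2] at hp
            omega
    · -- row i unchanged
      have hEi : ∀ t : Fin k, E i t = if t = i then 1 else 0 := by
        intro t
        simp only [hE, Matrix.of_apply]
        by_cases h1 : i = t
        · subst h1; simp
        · rw [if_neg h1, if_neg (Ne.symm h1), if_neg]
          rintro ⟨-, h3⟩; exact hi h3
      calc (∑ t, E i t * Mmat k r j s t l)
          = ∑ t, (if t = i then 1 else 0) * Mmat k r j s t l := by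
            refine Finset.sum_congr rfl fun t _ => hEi t ▸ rfl
        _ = Mmat k r j s i l := by simp [Finset.sum_ite_eq]
        _ = Mmat k r j (s - 1) i l := by
            simp only [Mmat, Matrix.of_apply]
            have h1 : max ((s : ℤ) - ((i : ℕ) : ℤ)) 0 = 0 := by
              rw [max_eq_right]; omega
            have h2 : max (((s - 1 : ℕ) : ℤ) - ((i : ℕ) : ℤ)) 0 = 0 := by
              rw [max_eq_right]; omega
            rw [h1, h2]
  calc (Mmat k r j s).det = E.det * (Mmat k r j s).det := by rw [hEdet, one_mul]
    _ = (E * Mmat k r j s).det := (Matrix.det_mul _ _).symm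
    _ = (Mmat k r j (s - 1)).det := by rw [hmul]

lemma det_Mmat_all (k : ℕ) (r j : ℤ) (hr : 1 ≤ r) (hj : 0 ≤ j) :
    ∀ s : ℕ, s ≤ k - 1 → (Mmat k r j s).det = (Mmat k r j 0).det := by
  intro s
  induction s with
  | zero => intro _; rfl
  | succ n ih =>
    intro h
    rw [det_Mmat_step k r j hr hj (n+1) (by omega) h]
    simpa using ih (by omega)

/-- `{r+k-1, …, r+k-1}_j = [r, …, r]_j`: the two `k × k` determinants
`det((C(r+k+j-i-1, j+l-i)))` and `det((C(r+j-1, j+l-i)))` (indices `1 ≤ i, l ≤ k`)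
are equal. Here `i, l : Fin k` are `0`-based, so `i, l` below stand for `i-1, l-1`. -/
theorem stmt0 (k : ℕ) (hk : 1 ≤ k) (r j : ℤ) (hr : 1 ≤ r) (hj : 0 ≤ j) :
    Matrix.det (Matrix.of fun i l : Fin k =>
      icb (r + k + j - ((i : ℕ) : ℤ) - 2) (j + ((l : ℕ) : ℤ) - ((i : ℕ) : ℤ))) =
    Matrix.det (Matrix.of fun i l : Fin k =>
      icb (r + j - 1) (j + ((l : ℕ) : ℤ) - ((i : ℕ) : ℤ))) := by
  have h1 : (Matrix.of fun i l : Fin k =>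
      icb (r + k + j - ((i : ℕ) : ℤ) - 2) (j + ((l : ℕ) : ℤ) - ((i : ℕ) : ℤ)))
      = Mmat k r j (k - 1) := by
    ext i l
    simp only [Mmat, Matrix.of_apply]
    congr 1
    have hik : (i : ℕ) ≤ k - 1 := by omega
    rw [max_eq_left (by omega)]
    omega
  have h2 : (Matrix.of fun i l : Fin k =>
      icb (r + j - 1) (j + ((l : ℕ) : ℤ) - ((i : ℕ) : ℤ)))
      = Mmat k r j 0 := by
    ext i l
    simp only [Mmat, Matrix.of_apply]
    congr 1
    rw [max_eq_right (by omega)]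
    ring
  rw [h1, h2]
  exact det_Mmat_all k r j hr hj (k - 1) le_rfl
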